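/- arXiv:2006.07998 — 4 statements merged into one kernel-verified Lean document; each statement's English description precedes it below -/
import Mathlib

section
/- Let P and Q be aperiodic irreducible row-stochastic matrices and let R be a transition coupling of P and Q lying in the relative interior of the polytope of transition couplings Π_TC(P,Q). Then R(s,s') > 0 whenever (P ⊗ Q)(s,s') > 0; consequently there exists a > 0 with a·(P⊗Q) ≤ R entrywise, and R is aperiodic and irreducible. -/
open Finset

/-- The independent (tensor product) transition coupling of `P` and `Q`. -/
def indepCoupling {d e : ℕ} (P : Matrix (Fin d) (Fin d) ℝ) (Q : Matrix (Fin e) (Fin e) ℝ) :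
    Matrix (Fin d × Fin e) (Fin d × Fin e) ℝ :=
  Matrix.of fun s s' => P s.1 s'.1 * Q s.2 s'.2

/-- The polytope of transition couplings of `P` and `Q`. -/
def PiTC {d e : ℕ} (P : Matrix (Fin d) (Fin d) ℝ) (Q : Matrix (Fin e) (Fin e) ℝ) :
    Set (Matrix (Fin d × Fin e) (Fin d × Fin e) ℝ) :=
  {R | (∀ s s', 0 ≤ R s s') ∧
    (∀ x y x', ∑ y', R (x, y) (x', y') = P x x') ∧
    (∀ x y y', ∑ x', R (x, y) (x', y') = Q y y')}

def MatIrreducible {S : Type*} [Fintype S] [DecidableEq S] (U : Matrix S S ℝ) : Prop :=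
  ∀ s s' : S, ∃ k : ℕ, 1 ≤ k ∧ 0 < (U ^ k) s s'

def MatAperiodic {S : Type*} [Fintype S] [DecidableEq S] (U : Matrix S S ℝ) : Prop :=
  ∀ s : S, ∀ m : ℕ, (∀ k : ℕ, 1 ≤ k → 0 < (U ^ k) s s → m ∣ k) → m = 1


lemma bezout_finset (M : AddSubmonoid ℕ) :
    ∀ F : Finset ℕ, (↑F ⊆ (M : Set ℕ)) → ∃ p q : ℕ, p ∈ M ∧ q ∈ M ∧ (p : ℤ) - q = F.gcd id := by
  intro F
  induction F using Finset.induction with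
  | empty => intro _; exact ⟨0, 0, M.zero_mem, M.zero_mem, by simp⟩
  | insert a F ha ih =>
    intro hsub
    obtain ⟨p, q, hp, hq, hpq⟩ := ih (fun x hx => hsub (by simp [hx]))
    have haM : a ∈ M := hsub (by simp)
    rw [Finset.gcd_insert]
    set g : ℕ := F.gcd id with hg
    have hbez : (Nat.gcd a g : ℤ) = a * Nat.gcdA a g + g * Nat.gcdB a g := Nat.gcd_eq_gcd_ab a g
    set u := Nat.gcdA a g
    set v := Nat.gcdB a g
    refine ⟨u.toNat * a + v.toNat * p + (-v).toNat * q,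
            (-u).toNat * a + (-v).toNat * p + v.toNat * q, ?_, ?_, ?_⟩
    · exact M.add_mem (M.add_mem (M.nsmul_mem haM _) (M.nsmul_mem hp _)) (M.nsmul_mem hq _)
    · exact M.add_mem (M.add_mem (M.nsmul_mem haM _) (M.nsmul_mem hp _)) (M.nsmul_mem hq _)
    · push_cast
      have h1 : (u.toNat : ℤ) - (-u).toNat = u := by simp [Int.toNat_sub_toNat_neg]
      have h2 : (v.toNat : ℤ) - (-v).toNat = v := by simp [Int.toNat_sub_toNat_neg]
      have hgq : (g : ℤ) = p - q := hpq.symm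
      simp only [id] at hbez ⊢
      have hgg : GCDMonoid.gcd a g = Nat.gcd a g := rfl
      rw [hgg]
      nlinarith [h1, h2, hbez, hgq]

lemma semigroup_cofinite (S : Set ℕ)
    (hadd : ∀ a ∈ S, ∀ b ∈ S, a + b ∈ S)
    (hne : ∃ k, 1 ≤ k ∧ k ∈ S)
    (hgcd : ∀ m : ℕ, (∀ k ∈ S, m ∣ k) → m = 1) :
    ∃ N, ∀ k, N ≤ k → k ∈ S := by
  classical
  obtain ⟨k0, hk1, hk0S⟩ := hne
  -- the submonoid S ∪ {0}
  set M : AddSubmonoid ℕ :=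
    { carrier := insert 0 S
      zero_mem' := by simp
      add_mem' := by
        rintro a b (rfl | ha) (rfl | hb)
        · simp
        · simpa using Or.inr hb
        · simpa using Or.inr ha
        · exact Or.inr (hadd _ ha _ hb) } with hM
  have hMS : ∀ n, n ∈ M → n ≠ 0 → n ∈ S := by
    rintro n (rfl | hn) h
    · exact absurd rfl h
    · exact hn
  have hSM : ∀ n ∈ S, n ∈ M := fun n hn => Or.inr hn
  -- minimal positive finset gcd
  set D : Set ℕ := {n | 0 < n ∧ ∃ F : Finset ℕ, ↑F ⊆ S ∧ F.gcd id = n} with hD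
  have hDne : D.Nonempty := ⟨k0, hk1, {k0}, by simpa using hk0S, by simp⟩
  obtain ⟨hdpos, F, hFS, hFg⟩ := Nat.sInf_mem hDne
  set dd := sInf D with hdd
  have hdvd : ∀ x ∈ S, dd ∣ x := by
    intro x hx
    have hgx : (insert x F).gcd id = Nat.gcd x dd := by rw [Finset.gcd_insert, hFg]; rfl
    have hmem : Nat.gcd x dd ∈ D := by
      refine ⟨Nat.gcd_pos_of_pos_right x hdpos, insert x F, ?_, hgx⟩
      intro y hy
      rcases Finset.mem_insert.mp (by exact_mod_cast hy) with rfl | hy'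
      · exact hx
      · exact hFS hy'
    have h1 : dd ≤ Nat.gcd x dd := Nat.sInf_le hmem
    have h2 : Nat.gcd x dd ∣ dd := Nat.gcd_dvd_right x dd
    have h3 : Nat.gcd x dd = dd := le_antisymm (Nat.le_of_dvd hdpos h2) h1
    exact h3 ▸ Nat.gcd_dvd_left x dd
  have hd1 : dd = 1 := hgcd dd hdvd
  -- Bezout
  obtain ⟨p, q, hp, hq, hpq⟩ := bezout_finset M F (fun x hx => hSM x (hFS hx))
  rw [hFg, hd1] at hpq
  have hpq' : p = q + 1 := by omega
  rcases Nat.eq_zero_or_pos q with rfl | hqpos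
  · refine ⟨1, fun k hk => ?_⟩
    have : k ∈ M := by
      have := M.nsmul_mem hp k
      simpa [hpq'] using this
    exact hMS k this (by omega)
  · refine ⟨q * q + 1, fun k hk => ?_⟩
    set t := k / q with ht
    set r := k % q with hr
    have hrq : r < q := Nat.mod_lt _ hqpos
    have htq : q ≤ t := by
      rw [ht, Nat.le_div_iff_mul_le hqpos]
      omega
    have hkeq : k = (t - r) * q + r * (q + 1) := by
      have := Nat.div_add_mod k q
      have h' : q * t + r = k := this
      have : (t - r) * q + r * (q + 1) = t * q + r := by
        have hrt : r ≤ t := le_of_lt (lt_of_lt_of_le hrq htq)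
        zify [hrt]
        ring
      rw [this, mul_comm t q]
      omega
    have hkM : k ∈ M := by
      rw [hkeq, ← hpq']
      exact M.add_mem (M.nsmul_mem hq _) (M.nsmul_mem hp _)
    exact hMS k hkM (by omega)

section Mat
variable {S : Type*} [Fintype S] [DecidableEq S]

lemma pow_entries_nonneg (U : Matrix S S ℝ) (hU : ∀ a b, 0 ≤ U a b) :
    ∀ k : ℕ, ∀ a b, 0 ≤ (U ^ k) a b := by
  intro k
  induction k with
  | zero =>
    intro a b
    by_cases h : a = b <;> simp [Matrix.one_apply, h]
  | succ k ih =>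
    intro a b
    rw [pow_succ, Matrix.mul_apply]
    exact Finset.sum_nonneg fun t _ => mul_nonneg (ih a t) (hU t b)

lemma pow_add_entry_le (U : Matrix S S ℝ) (hU : ∀ a b, 0 ≤ U a b) (k l : ℕ) (a b c : S) :
    (U ^ k) a b * (U ^ l) b c ≤ (U ^ (k + l)) a c := by
  rw [pow_add, Matrix.mul_apply]
  exact Finset.single_le_sum
    (f := fun t => (U ^ k) a t * (U ^ l) t c)
    (fun t _ => mul_nonneg (pow_entries_nonneg U hU k a t) (pow_entries_nonneg U hU l t c))
    (Finset.mem_univ b)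

lemma primitive (U : Matrix S S ℝ) [Nonempty S] (hU : ∀ a b, 0 ≤ U a b)
    (hirr : MatIrreducible U) (hap : MatAperiodic U) :
    ∃ N : ℕ, 1 ≤ N ∧ ∀ k, N ≤ k → ∀ a b, 0 < (U ^ k) a b := by
  classical
  have hret : ∀ a : S, ∃ N : ℕ, ∀ k, N ≤ k → 0 < (U ^ k) a a := by
    intro a
    obtain ⟨N, hN⟩ := semigroup_cofinite {k : ℕ | 1 ≤ k ∧ 0 < (U ^ k) a a}
      (by
        rintro x ⟨hx1, hx2⟩ y ⟨hy1, hy2⟩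
        exact ⟨by omega, lt_of_lt_of_le (mul_pos hx2 hy2) (pow_add_entry_le U hU x y a a a)⟩)
      (by obtain ⟨k, hk1, hk2⟩ := hirr a a; exact ⟨k, hk1, hk1, hk2⟩)
      (fun m hm => hap a m (fun k hk1 hk2 => hm k ⟨hk1, hk2⟩))
    exact ⟨N, fun k hk => (hN k hk).2⟩
  choose N hN using hret
  choose m hm1 hm2 using hirr
  refine ⟨(Finset.univ : Finset (S × S)).sup (fun p => N p.1 + m p.1 p.2) + 1, by omega, ?_⟩
  intro k hk a b
  have hle : N a + m a b ≤ (Finset.univ : Finset (S × S)).sup (fun p => N p.1 + m p.1 p.2) :=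
    Finset.le_sup (f := fun p : S × S => N p.1 + m p.1 p.2) (Finset.mem_univ (a, b))
  have hk' : N a + m a b < k := by omega
  have hsplit : (k - m a b) + m a b = k := Nat.sub_add_cancel (by omega)
  have h1 : 0 < (U ^ (k - m a b)) a a := hN a _ (by omega)
  calc (0 : ℝ) < (U ^ (k - m a b)) a a * (U ^ (m a b)) a b := mul_pos h1 (hm2 a b)
    _ ≤ (U ^ ((k - m a b) + m a b)) a b := pow_add_entry_le U hU _ _ a a b
    _ = (U ^ k) a b := by rw [hsplit]

end Mat

lemma tensor_pow_le {d e : ℕ} (P : Matrix (Fin d) (Fin d) ℝ) (Q : Matrix (Fin e) (Fin e) ℝ)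
    (hPn : ∀ x x', 0 ≤ P x x') (hQn : ∀ y y', 0 ≤ Q y y')
    (R : Matrix (Fin d × Fin e) (Fin d × Fin e) ℝ) (hRn : ∀ s s', 0 ≤ R s s')
    (a : ℝ) (ha : 0 ≤ a) (hle : ∀ s s', a * indepCoupling P Q s s' ≤ R s s') :
    ∀ k : ℕ, ∀ s s', a ^ k * ((P ^ k) s.1 s'.1 * (Q ^ k) s.2 s'.2) ≤ (R ^ k) s s' := by
  intro k
  induction k with
  | zero =>
    intro s s'
    by_cases h : s = s'
    · subst h; simp [Matrix.one_apply]
    · rcases Prod.mk.injEq s.1 s.2 s'.1 s'.2 ▸ (fun hh => h (Prod.ext_iff.mpr hh) : ¬(s.1 = s'.1 ∧ s.2 = s'.2)) with _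
      have h' : ¬(s.1 = s'.1 ∧ s.2 = s'.2) := fun hh => h (Prod.ext_iff.mpr hh)
      rw [pow_zero, pow_zero, pow_zero, pow_zero]
      by_cases h1 : s.1 = s'.1
      · have h2 : s.2 ≠ s'.2 := fun hh => h' ⟨h1, hh⟩
        simp [Matrix.one_apply, h1, h2, h]
      · simp [Matrix.one_apply, h1, h]
  | succ k ih =>
    intro s s'
    have key : ∑ t : Fin d × Fin e,
        (a ^ k * ((P ^ k) s.1 t.1 * (Q ^ k) s.2 t.2)) * (a * (P t.1 s'.1 * Q t.2 s'.2))
        = a ^ (k + 1) * ((P ^ (k + 1)) s.1 s'.1 * (Q ^ (k + 1)) s.2 s'.2) := by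
      rw [pow_succ P, pow_succ Q, Matrix.mul_apply, Matrix.mul_apply, pow_succ a]
      rw [Fintype.sum_prod_type]
      rw [Finset.sum_mul_sum]
      simp only [Finset.mul_sum]
      refine Finset.sum_congr rfl fun u _ => ?_
      refine Finset.sum_congr rfl fun v _ => ?_
      ring
    calc a ^ (k + 1) * ((P ^ (k + 1)) s.1 s'.1 * (Q ^ (k + 1)) s.2 s'.2)
        = ∑ t : Fin d × Fin e,
            (a ^ k * ((P ^ k) s.1 t.1 * (Q ^ k) s.2 t.2)) * (a * (P t.1 s'.1 * Q t.2 s'.2)) :=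
          key.symm
      _ ≤ ∑ t : Fin d × Fin e, (R ^ k) s t * R t s' := by
          refine Finset.sum_le_sum fun t _ => ?_
          have h1 := ih s t
          have h2 := hle t s'
          have hl1 : 0 ≤ a ^ k * ((P ^ k) s.1 t.1 * (Q ^ k) s.2 t.2) :=
            mul_nonneg (pow_nonneg ha k)
              (mul_nonneg (pow_entries_nonneg P hPn k _ _) (pow_entries_nonneg Q hQn k _ _))
          have hl2 : 0 ≤ a * (P t.1 s'.1 * Q t.2 s'.2) :=
            mul_nonneg ha (mul_nonneg (hPn _ _) (hQn _ _))
          exact mul_le_mul h1 (by simpa [indepCoupling] using h2) hl2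
            (pow_entries_nonneg R hRn k s t)
      _ = (R ^ (k + 1)) s s' := by rw [pow_succ, Matrix.mul_apply]

/-- a transition coupling in the relative interior of `Π_TC(P,Q)` dominates a
positive multiple of the independent coupling and is aperiodic and irreducible. -/
theorem stmt_4 (d e : ℕ)
    (P : Matrix (Fin d) (Fin d) ℝ) (Q : Matrix (Fin e) (Fin e) ℝ)
    (hP : (∀ x x', 0 ≤ P x x') ∧ ∀ x, ∑ x', P x x' = 1)
    (hQ : (∀ y y', 0 ≤ Q y y') ∧ ∀ y, ∑ y', Q y y' = 1)
    (hPirr : MatIrreducible P) (hPap : MatAperiodic P)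
    (hQirr : MatIrreducible Q) (hQap : MatAperiodic Q)
    (R : Matrix (Fin d × Fin e) (Fin d × Fin e) ℝ)
    (hR : R ∈ PiTC P Q)
    (hri : ∃ ε > (0 : ℝ), ∀ R' : Matrix (Fin d × Fin e) (Fin d × Fin e) ℝ,
      (∀ s s', |R' s s' - R s s'| < ε) → R' ∈ affineSpan ℝ (PiTC P Q) → R' ∈ PiTC P Q) :
    (∀ s s', 0 < indepCoupling P Q s s' → 0 < R s s') ∧
    (∃ a > (0 : ℝ), ∀ s s', a * indepCoupling P Q s s' ≤ R s s') ∧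
    MatIrreducible R ∧ MatAperiodic R := by
  classical
  obtain ⟨hRnn, hRrow, hRcol⟩ := hR
  obtain ⟨hPn, hPs⟩ := hP
  obtain ⟨hQn, hQs⟩ := hQ
  have hindep_mem : indepCoupling P Q ∈ PiTC P Q := by
    refine ⟨fun s s' => mul_nonneg (hPn _ _) (hQn _ _), ?_, ?_⟩
    · intro x y x'
      simp only [indepCoupling, Matrix.of_apply]
      rw [← Finset.mul_sum, hQs y, mul_one]
    · intro x y y'
      simp only [indepCoupling, Matrix.of_apply]
      rw [← Finset.sum_mul, hPs x, one_mul]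
  obtain ⟨ε, hε, hri⟩ := hri
  rcases isEmpty_or_nonempty (Fin d × Fin e) with hemp | hne
  · exact ⟨fun s => (IsEmpty.false s).elim, ⟨1, one_pos, fun s => (IsEmpty.false s).elim⟩,
      fun s => (IsEmpty.false s).elim, fun s => (IsEmpty.false s).elim⟩
  have hpos : ∀ s s', 0 < indepCoupling P Q s s' → 0 < R s s' := by
    intro s0 s0' hind
    by_contra hc
    have hR0 : R s0 s0' = 0 := le_antisymm (not_lt.mp hc) (hRnn _ _)
    set C : ℝ := Finset.univ.sup' Finset.univ_nonempty
      (fun p : (Fin d × Fin e) × (Fin d × Fin e) =>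
        |R p.1 p.2 - indepCoupling P Q p.1 p.2|) with hCdef
    have hC0 : (0 : ℝ) ≤ C :=
      le_trans (abs_nonneg _)
        (Finset.le_sup' (f := fun p : (Fin d × Fin e) × (Fin d × Fin e) =>
          |R p.1 p.2 - indepCoupling P Q p.1 p.2|)
          (Finset.mem_univ (Classical.arbitrary _)))
    set t : ℝ := ε / (2 * (C + 1)) with htdef
    have ht : 0 < t := div_pos hε (by linarith)
    have hbound : ∀ u v, t * |R u v - indepCoupling P Q u v| < ε := by
      intro u v
      have h1 : |R u v - indepCoupling P Q u v| ≤ C :=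
        Finset.le_sup' (f := fun p : (Fin d × Fin e) × (Fin d × Fin e) =>
          |R p.1 p.2 - indepCoupling P Q p.1 p.2|) (Finset.mem_univ (u, v))
      have h2 : t * |R u v - indepCoupling P Q u v| ≤ t * C :=
        mul_le_mul_of_nonneg_left h1 ht.le
      have h3 : t * C < ε := by
        rw [htdef, div_mul_eq_mul_div, div_lt_iff₀ (by linarith : (0:ℝ) < 2 * (C + 1))]
        nlinarith
      linarith
    set R' := R + t • (R - indepCoupling P Q) with hR'def
    have hclose : ∀ u v, |R' u v - R u v| < ε := by
      intro u v
      have heq : R' u v - R u v = t * (R u v - indepCoupling P Q u v) := by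
        simp [hR'def, Matrix.add_apply, Matrix.smul_apply, Matrix.sub_apply]
        try ring
      rw [heq, abs_mul, abs_of_pos ht]
      exact hbound u v
    have haff : R' ∈ affineSpan ℝ (PiTC P Q) := by
      have h1 : R ∈ affineSpan ℝ (PiTC P Q) :=
        subset_affineSpan ℝ _ ⟨hRnn, hRrow, hRcol⟩
      have h2 : indepCoupling P Q ∈ affineSpan ℝ (PiTC P Q) :=
        subset_affineSpan ℝ _ hindep_mem
      have heq : R' = AffineMap.lineMap (indepCoupling P Q) R (1 + t) := by
        funext u v
        simp [hR'def, AffineMap.lineMap_apply, Matrix.add_apply, Matrix.smul_apply,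
          Matrix.sub_apply]
        try ring
      rw [heq]
      exact AffineMap.lineMap_mem _ h2 h1
    have hmem := hri R' hclose haff
    have h0 := hmem.1 s0 s0'
    have hval : R' s0 s0' = -(t * indepCoupling P Q s0 s0') := by
      simp [hR'def, Matrix.add_apply, Matrix.smul_apply, Matrix.sub_apply, hR0]
    rw [hval] at h0
    nlinarith
  set f : (Fin d × Fin e) × (Fin d × Fin e) → ℝ := fun p =>
    if 0 < indepCoupling P Q p.1 p.2 then R p.1 p.2 / indepCoupling P Q p.1 p.2 else 1
    with hfdef
  have hfpos : ∀ p, 0 < f p := by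
    intro p
    by_cases h : 0 < indepCoupling P Q p.1 p.2
    · simpa [hfdef, h] using div_pos (hpos _ _ h) h
    · simp [hfdef, h]
  set a : ℝ := Finset.univ.inf' Finset.univ_nonempty f with hadef
  have ha : 0 < a := (Finset.lt_inf'_iff Finset.univ_nonempty).mpr fun p _ => hfpos p
  have hdom : ∀ s s', a * indepCoupling P Q s s' ≤ R s s' := by
    intro s s'
    by_cases h : 0 < indepCoupling P Q s s'
    · have h1 : a ≤ f (s, s') := Finset.inf'_le _ (Finset.mem_univ _)
      have h2 : f (s, s') = R s s' / indepCoupling P Q s s' := by simp [hfdef, h]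
      calc a * indepCoupling P Q s s'
          ≤ (R s s' / indepCoupling P Q s s') * indepCoupling P Q s s' :=
            mul_le_mul_of_nonneg_right (h2 ▸ h1) h.le
        _ = R s s' := div_mul_cancel₀ _ (ne_of_gt h)
    · have h0 : indepCoupling P Q s s' = 0 :=
        le_antisymm (not_lt.mp h) (mul_nonneg (hPn _ _) (hQn _ _))
      rw [h0, mul_zero]
      exact hRnn s s'
  have hdne : Nonempty (Fin d) := ⟨(Classical.arbitrary (Fin d × Fin e)).1⟩
  have hene : Nonempty (Fin e) := ⟨(Classical.arbitrary (Fin d × Fin e)).2⟩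
  obtain ⟨NP, hNP1, hNP⟩ := primitive P hPn hPirr hPap
  obtain ⟨NQ, hNQ1, hNQ⟩ := primitive Q hQn hQirr hQap
  have hlow := tensor_pow_le P Q hPn hQn R hRnn a ha.le hdom
  have hbig : ∀ k, max NP NQ ≤ k → ∀ s s', 0 < (R ^ k) s s' := by
    intro k hk s s'
    have h1 : 0 < (P ^ k) s.1 s'.1 := hNP k (le_trans (le_max_left _ _) hk) _ _
    have h2 : 0 < (Q ^ k) s.2 s'.2 := hNQ k (le_trans (le_max_right _ _) hk) _ _
    calc (0 : ℝ) < a ^ k * ((P ^ k) s.1 s'.1 * (Q ^ k) s.2 s'.2) :=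
          mul_pos (pow_pos ha k) (mul_pos h1 h2)
      _ ≤ (R ^ k) s s' := hlow k s s'
  refine ⟨hpos, ⟨a, ha, hdom⟩, ?_, ?_⟩
  · intro s s'
    exact ⟨max NP NQ, le_trans hNP1 (le_max_left _ _), hbig _ le_rfl s s'⟩
  · intro s m hm
    have h1 := hm (max NP NQ) (le_trans hNP1 (le_max_left _ _)) (hbig _ le_rfl s s)
    have h2 := hm (max NP NQ + 1) (by omega) (hbig _ (by omega) s s)
    have h3 : m ∣ 1 := by simpa using Nat.dvd_sub h2 h1
    exact Nat.dvd_one.mp h3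
end

section
/- Let R be a row-stochastic matrix on a finite set S of cardinality n, mixing with coefficients M and α ∈ [0,1) toward its unique stationary distribution λ. Let c : S → ℝ, g = (λ·c)·𝟙, and define the bias h = ∑_{t=0}^∞ R^t (c − g) and its truncation h' = ∑_{t=0}^T R^t (c − g). Then ‖h' − h‖₁ ≤ M ‖c‖_∞ n α^{T+1} / (1 − α). In particular, the infinite series defining h converges. -/
open Finset

lemma tail_bound (b α : ℝ) (hα0 : 0 ≤ α) (hα1 : α < 1)
    (u : ℕ → ℝ) (hu : ∀ t, |u t| ≤ b * α ^ t) (T : ℕ) :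
    |(∑ t ∈ Finset.range (T + 1), u t) - ∑' t, u t| ≤ b * α ^ (T + 1) / (1 - α) := by
  have hgeo : Summable (fun t : ℕ => b * α ^ t) :=
    (summable_geometric_of_lt_one hα0 hα1).mul_left _
  have habs : Summable (fun t => |u t|) :=
    Summable.of_nonneg_of_le (fun t => abs_nonneg _) hu hgeo
  have hsum : Summable u := habs.of_abs
  have hsplit := Summable.sum_add_tsum_nat_add (f := u) (T + 1) hsum
  have heq : (∑ t ∈ Finset.range (T + 1), u t) - ∑' t, u t
      = -(∑' t, u (t + (T + 1))) := by rw [← hsplit]; ring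
  rw [heq, abs_neg]
  have htail : Summable (fun t => |u (t + (T + 1))|) :=
    habs.comp_injective (add_left_injective (T + 1))
  have hgeo' : Summable (fun t : ℕ => b * α ^ (T + 1) * α ^ t) :=
    (summable_geometric_of_lt_one hα0 hα1).mul_left _
  have hgeo'' : Summable (fun t : ℕ => b * α ^ (t + (T + 1))) := by
    refine hgeo'.congr fun t => by rw [pow_add]; ring
  calc |∑' t, u (t + (T + 1))| ≤ ∑' t, |u (t + (T + 1))| := by
        have htail' : Summable (fun t => ‖u (t + (T + 1))‖) := by
          simpa [Real.norm_eq_abs] using htail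
        simpa [Real.norm_eq_abs] using norm_tsum_le_tsum_norm htail'
    _ ≤ ∑' t : ℕ, b * α ^ (t + (T + 1)) :=
        Summable.tsum_le_tsum (fun t => hu (t + (T + 1))) htail hgeo''
    _ = b * α ^ (T + 1) / (1 - α) := by
        rw [tsum_congr (fun t : ℕ => by rw [pow_add]; ring :
              ∀ t : ℕ, b * α ^ (t + (T + 1)) = b * α ^ (T + 1) * α ^ t),
          tsum_mul_left, tsum_geometric_of_lt_one hα0 hα1]
        field_simp

/-- the bias series `h = ∑_{t≥0} R^t (c − g)` converges, and its truncation
`h' = ∑_{t=0}^T R^t (c − g)` satisfies `‖h' − h‖₁ ≤ M ‖c‖_∞ n α^{T+1} / (1 − α)`. -/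
theorem stmt_6 (n : ℕ)
    (R : Matrix (Fin n) (Fin n) ℝ)
    (hR : (∀ s s', 0 ≤ R s s') ∧ ∀ s, ∑ s', R s s' = 1)
    (lam : Fin n → ℝ)
    (hlam : (∀ s, 0 ≤ lam s) ∧ ∑ s, lam s = 1)
    (hstat : ∀ s', ∑ s, lam s * R s s' = lam s')
    (huniq : ∀ lam' : Fin n → ℝ, (∀ s, 0 ≤ lam' s) → (∑ s, lam' s = 1) →
      (∀ s', ∑ s, lam' s * R s s' = lam' s') → lam' = lam)
    (M α : ℝ) (hM : 0 ≤ M) (hα : 0 ≤ α ∧ α < 1)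
    (hmix : ∀ t : ℕ, ∀ s, ∑ s', |(R ^ t) s s' - lam s'| ≤ M * α ^ t)
    (c : Fin n → ℝ) :
    ∃ h : Fin n → ℝ,
      (∀ s, HasSum (fun t : ℕ => ∑ s', (R ^ t) s s' * (c s' - ∑ u, lam u * c u)) (h s)) ∧
      ∀ T : ℕ,
        ∑ s, |(∑ t ∈ Finset.range (T + 1), ∑ s', (R ^ t) s s' * (c s' - ∑ u, lam u * c u)) - h s|
          ≤ M * ‖c‖ * n * α ^ (T + 1) / (1 - α) := by
  obtain ⟨hα0, hα1⟩ := hα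
  set g : ℝ := ∑ u, lam u * c u with hg
  set f : ℕ → Fin n → ℝ := fun t s => ∑ s', (R ^ t) s s' * (c s' - g) with hf
  -- row stochasticity of powers
  have hrow : ∀ t : ℕ, ∀ s, ∑ s', (R ^ t) s s' = 1 := by
    intro t
    induction t with
    | zero => intro s; simp [Matrix.one_apply, Finset.sum_ite_eq' Finset.univ s]
    | succ t ih =>
      intro s
      rw [pow_succ]
      simp only [Matrix.mul_apply]
      rw [Finset.sum_comm]
      have : ∀ u, ∑ s', (R ^ t) s u * R u s' = (R ^ t) s u := by
        intro u
        rw [← Finset.mul_sum, hR.2 u, mul_one]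
      simp_rw [this]
      exact ih s
  -- rewrite f
  have hfeq : ∀ t s, f t s = ∑ s', ((R ^ t) s s' - lam s') * c s' := by
    intro t s
    simp only [hf, mul_sub, sub_mul, Finset.sum_sub_distrib]
    congr 1
    rw [← Finset.sum_mul, hrow t s, one_mul, hg]
  -- bound on |f t s|
  have hbound : ∀ s t, |f t s| ≤ M * ‖c‖ * α ^ t := by
    intro s t
    rw [hfeq]
    calc |∑ s', ((R ^ t) s s' - lam s') * c s'| ≤ ∑ s', |((R ^ t) s s' - lam s') * c s'| :=
          Finset.abs_sum_le_sum_abs _ _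
      _ ≤ ∑ s', |(R ^ t) s s' - lam s'| * ‖c‖ := by
          apply Finset.sum_le_sum
          intro s' _
          rw [abs_mul]
          exact mul_le_mul_of_nonneg_left
            ((Real.norm_eq_abs (c s')).symm ▸ norm_le_pi_norm c s') (abs_nonneg _)
      _ = (∑ s', |(R ^ t) s s' - lam s'|) * ‖c‖ := (Finset.sum_mul _ _ _).symm
      _ ≤ (M * α ^ t) * ‖c‖ :=
          mul_le_mul_of_nonneg_right (hmix t s) (norm_nonneg c)
      _ = M * ‖c‖ * α ^ t := by ring
  have hsumgeo : Summable (fun t : ℕ => M * ‖c‖ * α ^ t) :=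
    (summable_geometric_of_lt_one hα0 hα1).mul_left _
  have hsum : ∀ s, Summable (fun t => f t s) := fun s =>
    (Summable.of_nonneg_of_le (fun t => abs_nonneg _) (hbound s) hsumgeo).of_abs
  refine ⟨fun s => ∑' t, f t s, fun s => (hsum s).hasSum, ?_⟩
  intro T
  calc ∑ s, |(∑ t ∈ Finset.range (T + 1), f t s) - ∑' t, f t s|
      ≤ ∑ _s : Fin n, M * ‖c‖ * α ^ (T + 1) / (1 - α) :=
        Finset.sum_le_sum (fun s _ =>
          tail_bound (M * ‖c‖) α hα0 hα1 (fun t => f t s) (hbound s) T)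
    _ = M * ‖c‖ * n * α ^ (T + 1) / (1 - α) := by
        rw [Finset.sum_const, Finset.card_univ, Fintype.card_fin, nsmul_eq_mul]
        ring
end

section
/- Gluing lemma for transition couplings: Let P₁, P₂, P₃ be row-stochastic matrices on a finite set X, let R₁₂ be a transition coupling of P₁ and P₂ and R₂₃ a transition coupling of P₂ and P₃. Then there exists a row-stochastic matrix R₁₂₃ on X³ such that each row R₁₂₃((x₁,x₂,x₃),·) is a three-way coupling of P₁(x₁,·), P₂(x₂,·), P₃(x₃,·), its (1,2)-marginal equals R₁₂((x₁,x₂),·) and its (2,3)-marginal equals R₂₃((x₂,x₃),·). Moreover, if P₁, P₂, P₃ are irreducible with unique stationary distributions p₁, p₂, p₃, then any stationary distribution λ of R₁₂₃ is a three-way coupling of p₁, p₂, p₃. -/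
open Finset

/-- gluing lemma for transition couplings, together with the fact that any
stationary distribution of the glued chain is a three-way coupling of the unique stationary
distributions of the marginal chains. -/
theorem stmt_10 (d : ℕ)
    (P₁ P₂ P₃ : Fin d → Fin d → ℝ)
    (h₁ : (∀ x x', 0 ≤ P₁ x x') ∧ ∀ x, ∑ x', P₁ x x' = 1)
    (h₂ : (∀ x x', 0 ≤ P₂ x x') ∧ ∀ x, ∑ x', P₂ x x' = 1)
    (h₃ : (∀ x x', 0 ≤ P₃ x x') ∧ ∀ x, ∑ x', P₃ x x' = 1)
    (R₁₂ R₂₃ : Fin d × Fin d → Fin d × Fin d → ℝ)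
    (hR₁₂ : (∀ s s', 0 ≤ R₁₂ s s') ∧
      (∀ x₁ x₂ x₁', ∑ x₂', R₁₂ (x₁, x₂) (x₁', x₂') = P₁ x₁ x₁') ∧
      (∀ x₁ x₂ x₂', ∑ x₁', R₁₂ (x₁, x₂) (x₁', x₂') = P₂ x₂ x₂'))
    (hR₂₃ : (∀ s s', 0 ≤ R₂₃ s s') ∧
      (∀ x₂ x₃ x₂', ∑ x₃', R₂₃ (x₂, x₃) (x₂', x₃') = P₂ x₂ x₂') ∧
      (∀ x₂ x₃ x₃', ∑ x₂', R₂₃ (x₂, x₃) (x₂', x₃') = P₃ x₃ x₃')) :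
    ∃ R : Fin d × Fin d × Fin d → Fin d × Fin d × Fin d → ℝ,
      (∀ s s', 0 ≤ R s s') ∧
      (∀ s x₁', ∑ x₂', ∑ x₃', R s (x₁', x₂', x₃') = P₁ s.1 x₁') ∧
      (∀ s x₂', ∑ x₁', ∑ x₃', R s (x₁', x₂', x₃') = P₂ s.2.1 x₂') ∧
      (∀ s x₃', ∑ x₁', ∑ x₂', R s (x₁', x₂', x₃') = P₃ s.2.2 x₃') ∧
      (∀ s x₁' x₂', ∑ x₃', R s (x₁', x₂', x₃') = R₁₂ (s.1, s.2.1) (x₁', x₂')) ∧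
      (∀ s x₂' x₃', ∑ x₁', R s (x₁', x₂', x₃') = R₂₃ (s.2.1, s.2.2) (x₂', x₃')) ∧
      (∀ p₁ p₂ p₃ : Fin d → ℝ,
        ((∀ x, 0 ≤ p₁ x) ∧ (∑ x, p₁ x = 1) ∧ (∀ x', ∑ x, p₁ x * P₁ x x' = p₁ x') ∧
          ∀ p' : Fin d → ℝ, (∀ x, 0 ≤ p' x) → (∑ x, p' x = 1) →
            (∀ x', ∑ x, p' x * P₁ x x' = p' x') → p' = p₁) →
        ((∀ x, 0 ≤ p₂ x) ∧ (∑ x, p₂ x = 1) ∧ (∀ x', ∑ x, p₂ x * P₂ x x' = p₂ x') ∧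
          ∀ p' : Fin d → ℝ, (∀ x, 0 ≤ p' x) → (∑ x, p' x = 1) →
            (∀ x', ∑ x, p' x * P₂ x x' = p' x') → p' = p₂) →
        ((∀ x, 0 ≤ p₃ x) ∧ (∑ x, p₃ x = 1) ∧ (∀ x', ∑ x, p₃ x * P₃ x x' = p₃ x') ∧
          ∀ p' : Fin d → ℝ, (∀ x, 0 ≤ p' x) → (∑ x, p' x = 1) →
            (∀ x', ∑ x, p' x * P₃ x x' = p' x') → p' = p₃) →
        ∀ lam : Fin d × Fin d × Fin d → ℝ,
          (∀ s, 0 ≤ lam s) → (∑ s, lam s = 1) →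
          (∀ s', ∑ s, lam s * R s s' = lam s') →
          (∀ x₁, ∑ x₂, ∑ x₃, lam (x₁, x₂, x₃) = p₁ x₁) ∧
          (∀ x₂, ∑ x₁, ∑ x₃, lam (x₁, x₂, x₃) = p₂ x₂) ∧
          (∀ x₃, ∑ x₁, ∑ x₂, lam (x₁, x₂, x₃) = p₃ x₃)) := by
  obtain ⟨hP₂n, _⟩ := h₂
  obtain ⟨hR12n, hR12a, hR12b⟩ := hR₁₂
  obtain ⟨hR23n, hR23a, hR23b⟩ := hR₂₃
  have key12 : ∀ x₁ x₂ y₁ y₂, P₂ x₂ y₂ = 0 → R₁₂ (x₁, x₂) (y₁, y₂) = 0 := by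
    intro x₁ x₂ y₁ y₂ h
    have hs := hR12b x₁ x₂ y₂
    rw [h] at hs
    exact (Finset.sum_eq_zero_iff_of_nonneg (fun i _ => hR12n _ _)).mp hs y₁ (Finset.mem_univ _)
  have key23 : ∀ x₂ x₃ y₂ y₃, P₂ x₂ y₂ = 0 → R₂₃ (x₂, x₃) (y₂, y₃) = 0 := by
    intro x₂ x₃ y₂ y₃ h
    have hs := hR23a x₂ x₃ y₂
    rw [h] at hs
    exact (Finset.sum_eq_zero_iff_of_nonneg (fun i _ => hR23n _ _)).mp hs y₃ (Finset.mem_univ _)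
  set Rf : Fin d × Fin d × Fin d → Fin d × Fin d × Fin d → ℝ := fun s t =>
    if P₂ s.2.1 t.2.1 = 0 then 0 else
      R₁₂ (s.1, s.2.1) (t.1, t.2.1) * R₂₃ (s.2.1, s.2.2) (t.2.1, t.2.2) / P₂ s.2.1 t.2.1
    with hRdef
  have hnn : ∀ s t, 0 ≤ Rf s t := by
    intro s t
    rw [hRdef]
    dsimp only
    split
    · exact le_refl 0
    · exact div_nonneg (mul_nonneg (hR12n _ _) (hR23n _ _)) (hP₂n _ _)
  have marg12 : ∀ s y₁ y₂, ∑ y₃, Rf s (y₁, y₂, y₃) = R₁₂ (s.1, s.2.1) (y₁, y₂) := by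
    intro s y₁ y₂
    rw [hRdef]
    dsimp only
    by_cases h : P₂ s.2.1 y₂ = 0
    · simp [h, key12 s.1 s.2.1 y₁ y₂ h]
    · simp only [if_neg h]
      rw [← Finset.sum_div, ← Finset.mul_sum, hR23a, mul_div_assoc, div_self h, mul_one]
  have marg23 : ∀ s y₂ y₃, ∑ y₁, Rf s (y₁, y₂, y₃) = R₂₃ (s.2.1, s.2.2) (y₂, y₃) := by
    intro s y₂ y₃
    rw [hRdef]
    dsimp only
    by_cases h : P₂ s.2.1 y₂ = 0
    · simp [h, key23 s.2.1 s.2.2 y₂ y₃ h]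
    · simp only [if_neg h]
      rw [← Finset.sum_div, ← Finset.sum_mul, hR12b, mul_comm, mul_div_assoc, div_self h, mul_one]
  have margP1 : ∀ s y₁, ∑ y₂, ∑ y₃, Rf s (y₁, y₂, y₃) = P₁ s.1 y₁ := by
    intro s y₁
    simp_rw [marg12 s y₁]
    exact hR12a s.1 s.2.1 y₁
  have margP2 : ∀ s y₂, ∑ y₁, ∑ y₃, Rf s (y₁, y₂, y₃) = P₂ s.2.1 y₂ := by
    intro s y₂
    simp_rw [fun y₁ => marg12 s y₁ y₂]
    exact hR12b s.1 s.2.1 y₂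
  have margP3 : ∀ s y₃, ∑ y₁, ∑ y₂, Rf s (y₁, y₂, y₃) = P₃ s.2.2 y₃ := by
    intro s y₃
    rw [Finset.sum_comm]
    simp_rw [fun y₂ => marg23 s y₂ y₃]
    exact hR23b s.2.1 s.2.2 y₃
  refine ⟨Rf, hnn, margP1, margP2, margP3, marg12, marg23, ?_⟩
  intro p₁ p₂ p₃ H1 H2 H3 lam hlnn hlsum hstat
  obtain ⟨hp1n, hp1s, hp1st, hp1u⟩ := H1
  obtain ⟨hp2n, hp2s, hp2st, hp2u⟩ := H2
  obtain ⟨hp3n, hp3s, hp3st, hp3u⟩ := H3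
  have hlsum' : ∑ a, ∑ b, ∑ c, lam (a, b, c) = 1 := by
    rw [← hlsum, Fintype.sum_prod_type]
    simp_rw [Fintype.sum_prod_type]
  -- coordinate 1
  have e1 : ∀ y, ∑ x, (∑ x₂, ∑ x₃, lam (x, x₂, x₃)) * P₁ x y = ∑ x₂, ∑ x₃, lam (y, x₂, x₃) := by
    intro y
    calc ∑ x, (∑ x₂, ∑ x₃, lam (x, x₂, x₃)) * P₁ x y
        = ∑ s : Fin d × Fin d × Fin d, lam s * P₁ s.1 y := by
          rw [Fintype.sum_prod_type]
          simp_rw [Fintype.sum_prod_type, Finset.sum_mul]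
      _ = ∑ s : Fin d × Fin d × Fin d, ∑ y₂, ∑ y₃, lam s * Rf s (y, y₂, y₃) := by
          refine Finset.sum_congr rfl fun s _ => ?_
          rw [← margP1 s y, Finset.mul_sum]
          exact Finset.sum_congr rfl fun y₂ _ => Finset.mul_sum _ _ _
      _ = ∑ y₂, ∑ y₃, ∑ s, lam s * Rf s (y, y₂, y₃) := by
          rw [Finset.sum_comm]
          exact Finset.sum_congr rfl fun y₂ _ => Finset.sum_comm
      _ = ∑ x₂, ∑ x₃, lam (y, x₂, x₃) := by simp_rw [hstat]
  have e2 : ∀ y, ∑ x, (∑ x₁, ∑ x₃, lam (x₁, x, x₃)) * P₂ x y = ∑ x₁, ∑ x₃, lam (x₁, y, x₃) := by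
    intro y
    calc ∑ x, (∑ x₁, ∑ x₃, lam (x₁, x, x₃)) * P₂ x y
        = ∑ s : Fin d × Fin d × Fin d, lam s * P₂ s.2.1 y := by
          rw [Fintype.sum_prod_type]
          simp_rw [Fintype.sum_prod_type, Finset.sum_mul]
          exact Finset.sum_comm
      _ = ∑ s : Fin d × Fin d × Fin d, ∑ y₁, ∑ y₃, lam s * Rf s (y₁, y, y₃) := by
          refine Finset.sum_congr rfl fun s _ => ?_
          rw [← margP2 s y, Finset.mul_sum]
          exact Finset.sum_congr rfl fun y₁ _ => Finset.mul_sum _ _ _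
      _ = ∑ y₁, ∑ y₃, ∑ s, lam s * Rf s (y₁, y, y₃) := by
          rw [Finset.sum_comm]
          exact Finset.sum_congr rfl fun y₁ _ => Finset.sum_comm
      _ = ∑ x₁, ∑ x₃, lam (x₁, y, x₃) := by simp_rw [hstat]
  have e3 : ∀ y, ∑ x, (∑ x₁, ∑ x₂, lam (x₁, x₂, x)) * P₃ x y = ∑ x₁, ∑ x₂, lam (x₁, x₂, y) := by
    intro y
    calc ∑ x, (∑ x₁, ∑ x₂, lam (x₁, x₂, x)) * P₃ x y
        = ∑ s : Fin d × Fin d × Fin d, lam s * P₃ s.2.2 y := by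
          rw [Fintype.sum_prod_type]
          simp_rw [Fintype.sum_prod_type, Finset.sum_mul]
          rw [Finset.sum_comm]
          exact Finset.sum_congr rfl fun x₁ _ => Finset.sum_comm
      _ = ∑ s : Fin d × Fin d × Fin d, ∑ y₁, ∑ y₂, lam s * Rf s (y₁, y₂, y) := by
          refine Finset.sum_congr rfl fun s _ => ?_
          rw [← margP3 s y, Finset.mul_sum]
          exact Finset.sum_congr rfl fun y₁ _ => Finset.mul_sum _ _ _
      _ = ∑ y₁, ∑ y₂, ∑ s, lam s * Rf s (y₁, y₂, y) := by
          rw [Finset.sum_comm]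
          exact Finset.sum_congr rfl fun y₁ _ => Finset.sum_comm
      _ = ∑ x₁, ∑ x₂, lam (x₁, x₂, y) := by simp_rw [hstat]
  have q1 := hp1u (fun x => ∑ x₂, ∑ x₃, lam (x, x₂, x₃))
    (fun x => Finset.sum_nonneg fun i _ => Finset.sum_nonneg fun j _ => hlnn _)
    hlsum' e1
  have hlsum2 : ∑ b, ∑ a, ∑ c, lam (a, b, c) = 1 := by rw [Finset.sum_comm]; exact hlsum'
  have q2 := hp2u (fun x => ∑ x₁, ∑ x₃, lam (x₁, x, x₃))
    (fun x => Finset.sum_nonneg fun i _ => Finset.sum_nonneg fun j _ => hlnn _)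
    hlsum2 e2
  have hlsum3 : ∑ c, ∑ a, ∑ b, lam (a, b, c) = 1 := by
    rw [← hlsum']
    rw [Finset.sum_comm]
    exact Finset.sum_congr rfl fun a _ => Finset.sum_comm
  have q3 := hp3u (fun x => ∑ x₁, ∑ x₂, lam (x₁, x₂, x))
    (fun x => Finset.sum_nonneg fun i _ => Finset.sum_nonneg fun j _ => hlnn _)
    hlsum3 e3
  exact ⟨fun x₁ => congrFun q1 x₁, fun x₂ => congrFun q2 x₂, fun x₃ => congrFun q3 x₃⟩
end

section
/- Triangle inequality for the optimal transition coupling cost: Let P₁, P₂, P₃ be irreducible row-stochastic matrices on a finite set X with unique stationary distributions p₁, p₂, p₃, and let c : X × X → ℝ₊ satisfy the triangle inequality c(x,z) ≤ c(x,y) + c(y,z). Define ρ(Pᵢ, Pⱼ) = min over pairs (λ, R) with R a transition coupling of Pᵢ and Pⱼ and λ a stationary distribution of R, of ∑_{(x,y)} c(x,y) λ(x,y). Then ρ(P₁,P₃) ≤ ρ(P₁,P₂) + ρ(P₂,P₃). -/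
open Finset

/-- The optimal transition coupling cost between chains with transition matrices `P` and `Q`,
for a cost `c` on pairs of states: the infimum (a minimum, by compactness) of the expected
cost over stationary distributions of transition couplings of `P` and `Q`. -/
noncomputable def otcCost (d : ℕ) (c : Fin d → Fin d → ℝ)
    (P Q : Matrix (Fin d) (Fin d) ℝ) : ℝ :=
  sInf {v | ∃ lam : Fin d × Fin d → ℝ, ∃ R : Fin d × Fin d → Fin d × Fin d → ℝ,
    (∀ s s', 0 ≤ R s s') ∧
    (∀ x y x', ∑ y', R (x, y) (x', y') = P x x') ∧
    (∀ x y y', ∑ x', R (x, y) (x', y') = Q y y') ∧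
    (∀ s, 0 ≤ lam s) ∧ (∑ s, lam s = 1) ∧
    (∀ s', ∑ s, lam s * R s s' = lam s') ∧
    v = ∑ s : Fin d × Fin d, c s.1 s.2 * lam s}

open Filter in
lemma cesaro {ι : Type*} [Fintype ι] [Nonempty ι]
    (M : ι → ι → ℝ) (hM0 : ∀ i j, 0 ≤ M i j) (hM1 : ∀ i, ∑ j, M i j = 1)
    (μ : ι → ℝ) (hμ0 : ∀ i, 0 ≤ μ i) (hμ1 : ∑ i, μ i = 1)
    (C : Set (ι → ℝ)) (hCc : IsClosed C) (hCx : Convex ℝ C) (hμC : μ ∈ C)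
    (hCi : ∀ v ∈ C, (fun j => ∑ i, v i * M i j) ∈ C) :
    ∃ η ∈ C, (∀ i, 0 ≤ η i) ∧ (∑ i, η i = 1) ∧ ∀ j, ∑ i, η i * M i j = η j := by
  set step : (ι → ℝ) → (ι → ℝ) := fun v j => ∑ i, v i * M i j with hstep
  have hstep0 : ∀ v, (∀ i, 0 ≤ v i) → ∀ j, 0 ≤ step v j := fun v hv j =>
    Finset.sum_nonneg fun i _ => mul_nonneg (hv i) (hM0 i j)
  have hstep1 : ∀ v, (∑ i, v i = 1) → ∑ j, step v j = 1 := by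
    intro v hv
    simp only [hstep]
    rw [Finset.sum_comm]
    simp [← Finset.mul_sum, hM1, hv]
  set u : ℕ → ι → ℝ := fun k => step^[k] μ with hu
  have husucc : ∀ k, u (k + 1) = step (u k) := by
    intro k; simp only [hu, Function.iterate_succ_apply']
  have hu0 : ∀ k i, 0 ≤ u k i := by
    intro k; induction k with
    | zero => exact hμ0
    | succ n ih => rw [husucc]; exact hstep0 _ ih
  have hu1 : ∀ k, ∑ i, u k i = 1 := by
    intro k; induction k with
    | zero => exact hμ1
    | succ n ih => rw [husucc]; exact hstep1 _ ih
  have hu_le1 : ∀ k i, u k i ≤ 1 := by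
    intro k i
    calc u k i ≤ ∑ j, u k j := Finset.single_le_sum (fun j _ => hu0 k j) (Finset.mem_univ i)
    _ = 1 := hu1 k
  have huC : ∀ k, u k ∈ C := by
    intro k; induction k with
    | zero => exact hμC
    | succ n ih => rw [husucc]; exact hCi _ ih
  set a : ℕ → ι → ℝ := fun n i => ((n : ℝ) + 1)⁻¹ * ∑ k ∈ Finset.range (n + 1), u k i with ha
  have hn1 : ∀ n : ℕ, (0:ℝ) < (n : ℝ) + 1 := fun n => by positivity
  have ha0 : ∀ n i, 0 ≤ a n i := fun n i =>
    mul_nonneg (by positivity) (Finset.sum_nonneg fun k _ => hu0 k i)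
  have ha1 : ∀ n, ∑ i, a n i = 1 := by
    intro n
    simp only [ha, ← Finset.mul_sum]
    rw [Finset.sum_comm]
    simp only [hu1, Finset.sum_const, Finset.card_range, nsmul_eq_mul, mul_one]
    push_cast
    exact inv_mul_cancel₀ (hn1 n).ne'
  have haC : ∀ n, a n ∈ C := by
    intro n
    have : a n = ∑ k ∈ Finset.range (n + 1), (((n : ℝ) + 1)⁻¹ : ℝ) • u k := by
      funext i
      simp [ha, Finset.mul_sum, Finset.sum_apply]
    rw [this]
    refine hCx.sum_mem (fun k _ => by positivity) ?_ (fun k _ => huC k)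
    simp only [Finset.sum_const, Finset.card_range, nsmul_eq_mul]
    push_cast
    exact mul_inv_cancel₀ (hn1 n).ne'
  have hale1 : ∀ n i, a n i ≤ 1 := by
    intro n i
    calc a n i ≤ ∑ j, a n j := Finset.single_le_sum (fun j _ => ha0 n j) (Finset.mem_univ i)
    _ = 1 := ha1 n
  have hmem : ∀ n, a n ∈ Set.Icc (0 : ι → ℝ) 1 := by
    intro n
    constructor <;> intro i
    · exact ha0 n i
    · exact hale1 n i
  obtain ⟨η, hηI, φ, hφ, hlim⟩ := (isCompact_Icc (a := (0 : ι → ℝ)) (b := 1)).tendsto_subseq hmem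
  have hptw : ∀ i, Tendsto (fun n => a (φ n) i) atTop (nhds (η i)) := fun i =>
    tendsto_pi_nhds.mp hlim i
  have hηC : η ∈ C := hCc.mem_of_tendsto hlim (Eventually.of_forall fun n => haC _)
  have hη0 : ∀ i, 0 ≤ η i := fun i => hηI.1 i
  have hη1 : ∑ i, η i = 1 := by
    have h1 : Tendsto (fun n => ∑ i, a (φ n) i) atTop (nhds (∑ i, η i)) :=
      tendsto_finset_sum _ fun i _ => hptw i
    have h2 : (fun n => ∑ i, a (φ n) i) = fun _ => (1:ℝ) := funext fun n => ha1 _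
    rw [h2] at h1
    exact tendsto_nhds_unique h1 tendsto_const_nhds
  refine ⟨η, hηC, hη0, hη1, ?_⟩
  intro j
  have h1 : Tendsto (fun n => step (a (φ n)) j) atTop (nhds (step η j)) := by
    simp only [hstep]
    exact tendsto_finset_sum _ fun i _ => (hptw i).mul tendsto_const_nhds
  have h2 : ∀ n, step (a n) j = a n j + ((n : ℝ) + 1)⁻¹ * (u (n + 1) j - u 0 j) := by
    intro n
    have e1 : step (a n) j = ((n : ℝ) + 1)⁻¹ * ∑ k ∈ Finset.range (n + 1), u (k + 1) j := by
      have e2 : ∀ k, u (k + 1) j = ∑ x, u k x * M x j := by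
        intro k; rw [husucc k]
      simp only [hstep, ha, e2, Finset.mul_sum, Finset.sum_mul, mul_assoc]
      rw [Finset.sum_comm]
    have e3 : ∑ k ∈ Finset.range (n + 1), u (k + 1) j
        = (∑ k ∈ Finset.range (n + 1), u k j) + u (n + 1) j - u 0 j := by
      have t1 := Finset.sum_range_succ' (fun k => u k j) (n + 1)
      have t2 := Finset.sum_range_succ (fun k => u k j) (n + 1)
      linarith
    rw [e1, e3, ha]
    ring
  have herr : Tendsto (fun n => ((φ n : ℝ) + 1)⁻¹ * (u (φ n + 1) j - u 0 j)) atTop (nhds 0) := by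
    apply squeeze_zero_norm (a := fun n : ℕ => ((n : ℝ) + 1)⁻¹)
    · intro n
      rw [Real.norm_eq_abs, abs_mul]
      have hb : |u (φ n + 1) j - u 0 j| ≤ 1 := by
        rw [abs_le]
        constructor <;> nlinarith [hu0 (φ n + 1) j, hu0 0 j, hu_le1 (φ n + 1) j, hu_le1 0 j]
      have hc : |((φ n : ℝ) + 1)⁻¹| ≤ ((n : ℝ) + 1)⁻¹ := by
        rw [abs_of_pos (by positivity)]
        apply inv_anti₀ (hn1 n)
        have := hφ.le_apply (x := n)
        exact_mod_cast by linarith [(Nat.cast_le (α := ℝ)).mpr this]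
      calc |((φ n : ℝ) + 1)⁻¹| * |u (φ n + 1) j - u 0 j| ≤ ((n : ℝ) + 1)⁻¹ * 1 :=
        mul_le_mul hc hb (abs_nonneg _) (by positivity)
      _ = ((n : ℝ) + 1)⁻¹ := mul_one _
    · have := tendsto_one_div_add_atTop_nhds_zero_nat (𝕜 := ℝ)
      simpa [one_div] using this
  have h3 : Tendsto (fun n => step (a (φ n)) j) atTop (nhds (η j)) := by
    have := (hptw j).add herr
    rw [add_zero] at this
    convert this using 2 with n
    exact h2 (φ n)
  exact tendsto_nhds_unique h1 h3

lemma pow_nonneg_entries {d : ℕ} (P : Matrix (Fin d) (Fin d) ℝ)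
    (hP0 : ∀ x x', 0 ≤ P x x') : ∀ k x x', 0 ≤ (P ^ k) x x' := by
  intro k
  induction k with
  | zero =>
    intro x x'
    simp only [pow_zero, Matrix.one_apply]
    split <;> norm_num
  | succ n ih =>
    intro x x'
    rw [pow_succ, Matrix.mul_apply]
    exact Finset.sum_nonneg fun y _ => mul_nonneg (ih x y) (hP0 y x')


lemma stationary_pow {d : ℕ} (P : Matrix (Fin d) (Fin d) ℝ)
    (q : Fin d → ℝ) (hq : ∀ x', ∑ x, q x * P x x' = q x') :
    ∀ k x', ∑ x, q x * (P ^ k) x x' = q x' := by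
  intro k
  induction k with
  | zero =>
    intro x'
    simp [pow_zero, Matrix.one_apply, mul_ite]
  | succ n ih =>
    intro x'
    simp only [pow_succ, Matrix.mul_apply, Finset.mul_sum]
    rw [Finset.sum_comm]
    have : ∀ y, ∑ x, q x * ((P ^ n) x y * P y x') = q y * P y x' := by
      intro y
      rw [← ih y, Finset.sum_mul]
      exact Finset.sum_congr rfl fun x _ => by ring
    rw [Finset.sum_congr rfl fun y _ => this y]
    exact hq x'


lemma stationary_pos {d : ℕ} (P : Matrix (Fin d) (Fin d) ℝ)
    (hP0 : ∀ x x', 0 ≤ P x x') (hirr : MatIrreducible P)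
    (q : Fin d → ℝ) (hq0 : ∀ x, 0 ≤ q x) (hq1 : ∑ x, q x = 1)
    (hq : ∀ x', ∑ x, q x * P x x' = q x') : ∀ x, 0 < q x := by
  have hpow := pow_nonneg_entries P hP0
  have hqk := stationary_pow P q hq
  have hex : ∃ y₀, 0 < q y₀ := by
    by_contra h
    push_neg at h
    have : ∀ y, q y = 0 := fun y => le_antisymm (h y) (hq0 y)
    simp [this] at hq1
  obtain ⟨y₀, hy₀⟩ := hex
  intro x
  obtain ⟨k, -, hk⟩ := hirr y₀ x
  have h1 : q y₀ * (P ^ k) y₀ x ≤ ∑ y, q y * (P ^ k) y x :=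
    Finset.single_le_sum (fun y _ => mul_nonneg (hq0 y) (hpow k y x)) (Finset.mem_univ y₀)
  have h2 : 0 < q y₀ * (P ^ k) y₀ x := mul_pos hy₀ hk
  rw [hqk k x] at h1
  linarith


lemma stationary_unique {d : ℕ} (P : Matrix (Fin d) (Fin d) ℝ)
    (hP0 : ∀ x x', 0 ≤ P x x') (hirr : MatIrreducible P)
    (q r : Fin d → ℝ)
    (hq0 : ∀ x, 0 ≤ q x) (hq1 : ∑ x, q x = 1) (hq : ∀ x', ∑ x, q x * P x x' = q x')
    (hr0 : ∀ x, 0 ≤ r x) (hr1 : ∑ x, r x = 1) (hr : ∀ x', ∑ x, r x * P x x' = r x') :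
    q = r := by
  rcases isEmpty_or_nonempty (Fin d) with he | hne
  · exact funext fun x => (he.false x).elim
  have hrpos := stationary_pos P hP0 hirr r hr0 hr1 hr
  obtain ⟨s₀, -, hs₀⟩ := Finset.exists_min_image Finset.univ (fun s => q s / r s)
    ⟨Classical.arbitrary _, Finset.mem_univ _⟩
  set t := q s₀ / r s₀ with ht
  have ht_le : ∀ s, t * r s ≤ q s := by
    intro s
    have h := hs₀ s (Finset.mem_univ s)
    rw [← le_div_iff₀ (hrpos s)]
    exact h
  set w : Fin d → ℝ := fun s => q s - t * r s with hw
  have hw0 : ∀ s, 0 ≤ w s := fun s => by simp [hw]; linarith [ht_le s]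
  have hws₀ : w s₀ = 0 := by
    simp only [hw, ht]
    rw [div_mul_cancel₀ _ (hrpos s₀).ne']
    ring
  have hwstat : ∀ x', ∑ x, w x * P x x' = w x' := by
    intro x'
    simp only [hw, sub_mul, Finset.sum_sub_distrib, mul_assoc, ← Finset.mul_sum]
    rw [hq x', hr x']
  have hwsum : ∑ s, w s = 1 - t := by
    simp only [hw, Finset.sum_sub_distrib, ← Finset.mul_sum, hq1, hr1, mul_one]
  by_cases h1 : (1:ℝ) - t = 0
  · have hwz : ∀ s, w s = 0 := by
      have := (Finset.sum_eq_zero_iff_of_nonneg (fun s _ => hw0 s)).mp (by rw [hwsum, h1])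
      exact fun s => this s (Finset.mem_univ s)
    have htone : t = 1 := by linarith
    funext s
    have := hwz s
    simp only [hw] at this
    rw [htone] at this
    linarith
  · exfalso
    have hm : 0 < 1 - t := by
      have : 0 ≤ ∑ s, w s := Finset.sum_nonneg fun s _ => hw0 s
      rw [hwsum] at this
      exact lt_of_le_of_ne this (Ne.symm h1)
    set w' : Fin d → ℝ := fun s => (1 - t)⁻¹ * w s with hw'
    have hw'pos := stationary_pos P hP0 hirr w'
      (fun s => mul_nonneg (by positivity) (hw0 s))
      (by simp only [hw', ← Finset.mul_sum, hwsum]; exact inv_mul_cancel₀ h1)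
      (by
        intro x'
        simp only [hw', mul_assoc, ← Finset.mul_sum]
        rw [hwstat x'])
    have := hw'pos s₀
    rw [hw'] at this
    simp only [hws₀, mul_zero] at this
    exact lt_irrefl 0 this


def feasSet (d : ℕ) (c : Fin d → Fin d → ℝ) (P Q : Matrix (Fin d) (Fin d) ℝ) : Set ℝ :=
  {v | ∃ lam : Fin d × Fin d → ℝ, ∃ R : Fin d × Fin d → Fin d × Fin d → ℝ,
    (∀ s s', 0 ≤ R s s') ∧
    (∀ x y x', ∑ y', R (x, y) (x', y') = P x x') ∧
    (∀ x y y', ∑ x', R (x, y) (x', y') = Q y y') ∧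
    (∀ s, 0 ≤ lam s) ∧ (∑ s, lam s = 1) ∧
    (∀ s', ∑ s, lam s * R s s' = lam s') ∧
    v = ∑ s : Fin d × Fin d, c s.1 s.2 * lam s}

lemma feas_nonneg {d : ℕ} {c : Fin d → Fin d → ℝ} {P Q : Matrix (Fin d) (Fin d) ℝ}
    (hc : ∀ x y, 0 ≤ c x y) : ∀ v ∈ feasSet d c P Q, 0 ≤ v := by
  rintro v ⟨lam, R, -, -, -, hl0, -, -, rfl⟩
  exact Finset.sum_nonneg fun s _ => mul_nonneg (hc s.1 s.2) (hl0 s)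


lemma feas_nonempty {d : ℕ} (hd : 0 < d) (c : Fin d → Fin d → ℝ)
    (P Q : Matrix (Fin d) (Fin d) ℝ)
    (hP0 : ∀ x x', 0 ≤ P x x') (hP1 : ∀ x, ∑ x', P x x' = 1)
    (hQ0 : ∀ x x', 0 ≤ Q x x') (hQ1 : ∀ x, ∑ x', Q x x' = 1) :
    (feasSet d c P Q).Nonempty := by
  haveI : NeZero d := ⟨hd.ne'⟩
  set R : Fin d × Fin d → Fin d × Fin d → ℝ := fun s t => P s.1 t.1 * Q s.2 t.2 with hR
  have hR0 : ∀ s t, 0 ≤ R s t := fun s t => mul_nonneg (hP0 _ _) (hQ0 _ _)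
  have hRrow : ∀ s, ∑ t, R s t = 1 := by
    intro s
    rw [Fintype.sum_prod_type]
    simp only [hR, ← Finset.mul_sum, hQ1, mul_one]
    exact hP1 s.1
  set μ0 : Fin d × Fin d → ℝ := fun _ => ((d * d : ℕ) : ℝ)⁻¹ with hμ0def
  have hdd : ((d * d : ℕ) : ℝ) ≠ 0 := by positivity
  obtain ⟨η, -, hη0, hη1, hηs⟩ := cesaro R hR0 hRrow μ0
    (fun _ => by positivity)
    (by
      simp only [hμ0def, Finset.sum_const, Finset.card_univ, Fintype.card_prod,
        Fintype.card_fin, nsmul_eq_mul]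
      exact mul_inv_cancel₀ hdd)
    Set.univ isClosed_univ convex_univ (Set.mem_univ _) (fun v _ => Set.mem_univ _)
  refine ⟨∑ s : Fin d × Fin d, c s.1 s.2 * η s, η, R, hR0, ?_, ?_, hη0, hη1, hηs, rfl⟩
  · intro x y x'
    simp only [hR, ← Finset.mul_sum, hQ1, mul_one]
  · intro x y y'
    simp only [hR, ← Finset.sum_mul, hP1, one_mul]

lemma glue {d : ℕ} (hd : 0 < d)
    (P₁ P₂ P₃ : Matrix (Fin d) (Fin d) ℝ)
    (hP₁0 : ∀ x x', 0 ≤ P₁ x x') (hP₁1 : ∀ x, ∑ x', P₁ x x' = 1)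
    (hP₂0 : ∀ x x', 0 ≤ P₂ x x') (hP₂1 : ∀ x, ∑ x', P₂ x x' = 1)
    (hP₃0 : ∀ x x', 0 ≤ P₃ x x') (hP₃1 : ∀ x, ∑ x', P₃ x x' = 1)
    (hirr₂ : MatIrreducible P₂)
    (c : Fin d → Fin d → ℝ) (hc : ∀ x y, 0 ≤ c x y)
    (htri : ∀ x y z, c x z ≤ c x y + c y z)
    {a b : ℝ} (ha : a ∈ feasSet d c P₁ P₂) (hb : b ∈ feasSet d c P₂ P₃) :
    ∃ v ∈ feasSet d c P₁ P₃, v ≤ a + b := by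
  haveI : NeZero d := ⟨hd.ne'⟩
  obtain ⟨l12, R12, hR12_0, hR12_a, hR12_b, hl12_0, hl12_1, hl12_s, ha_eq⟩ := ha
  obtain ⟨l23, R23, hR23_0, hR23_a, hR23_b, hl23_0, hl23_1, hl23_s, hb_eq⟩ := hb
  -- the common middle marginal
  set q : Fin d → ℝ := fun y => ∑ x, l12 (x, y) with hq_def
  set q' : Fin d → ℝ := fun y => ∑ z, l23 (y, z) with hq'_def
  have hq0 : ∀ y, 0 ≤ q y := fun y => Finset.sum_nonneg fun x _ => hl12_0 _
  have hq'0 : ∀ y, 0 ≤ q' y := fun y => Finset.sum_nonneg fun z _ => hl23_0 _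
  have hq1 : ∑ y, q y = 1 := by
    rw [hq_def, Finset.sum_comm]
    rw [← Fintype.sum_prod_type]
    exact hl12_1
  have hq'1 : ∑ y, q' y = 1 := by
    rw [hq'_def, ← Fintype.sum_prod_type]
    exact hl23_1
  have hq_stat : ∀ y', ∑ y, q y * P₂ y y' = q y' := by
    intro y'
    have step1 : ∀ y, q y * P₂ y y' = ∑ x, ∑ x', l12 (x, y) * R12 (x, y) (x', y') := by
      intro y
      rw [hq_def]
      simp only [Finset.sum_mul]
      refine Finset.sum_congr rfl fun x _ => ?_
      rw [← hR12_b x y y', Finset.mul_sum]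
    calc ∑ y, q y * P₂ y y' = ∑ y, ∑ x, ∑ x', l12 (x, y) * R12 (x, y) (x', y') :=
          Finset.sum_congr rfl fun y _ => step1 y
    _ = ∑ y, ∑ x', ∑ x, l12 (x, y) * R12 (x, y) (x', y') :=
          Finset.sum_congr rfl fun y _ => Finset.sum_comm
    _ = ∑ x', ∑ y, ∑ x, l12 (x, y) * R12 (x, y) (x', y') := Finset.sum_comm
    _ = ∑ x', ∑ x, ∑ y, l12 (x, y) * R12 (x, y) (x', y') :=
          Finset.sum_congr rfl fun x' _ => Finset.sum_comm
    _ = ∑ x', l12 (x', y') := by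
          refine Finset.sum_congr rfl fun x' _ => ?_
          have := hl12_s (x', y')
          rw [← this, Fintype.sum_prod_type]
    _ = q y' := rfl
  have hq'_stat : ∀ y', ∑ y, q' y * P₂ y y' = q' y' := by
    intro y'
    have step1 : ∀ y, q' y * P₂ y y' = ∑ z, ∑ z', l23 (y, z) * R23 (y, z) (y', z') := by
      intro y
      rw [hq'_def]
      simp only [Finset.sum_mul]
      refine Finset.sum_congr rfl fun z _ => ?_
      rw [← hR23_a y z y', Finset.mul_sum]
    calc ∑ y, q' y * P₂ y y' = ∑ y, ∑ z, ∑ z', l23 (y, z) * R23 (y, z) (y', z') :=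
          Finset.sum_congr rfl fun y _ => step1 y
    _ = ∑ y, ∑ z', ∑ z, l23 (y, z) * R23 (y, z) (y', z') :=
          Finset.sum_congr rfl fun y _ => Finset.sum_comm
    _ = ∑ z', ∑ y, ∑ z, l23 (y, z) * R23 (y, z) (y', z') := Finset.sum_comm
    _ = ∑ z', l23 (y', z') := by
          refine Finset.sum_congr rfl fun z' _ => ?_
          have := hl23_s (y', z')
          rw [← this, Fintype.sum_prod_type]
    _ = q' y' := rfl
  have hqq' : q = q' := stationary_unique P₂ hP₂0 hirr₂ q q' hq0 hq1 hq_stat hq'0 hq'1 hq'_stat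
  have hqz12 : ∀ x y, q y = 0 → l12 (x, y) = 0 := by
    intro x y hy
    have h1 : l12 (x, y) ≤ q y :=
      Finset.single_le_sum (f := fun x => l12 (x, y)) (fun x _ => hl12_0 _) (Finset.mem_univ x)
    exact le_antisymm (hy ▸ h1) (hl12_0 _)
  have hqz23 : ∀ y z, q y = 0 → l23 (y, z) = 0 := by
    intro y z hy
    rw [hqq'] at hy
    have h1 : l23 (y, z) ≤ q' y :=
      Finset.single_le_sum (f := fun z => l23 (y, z)) (fun z _ => hl23_0 _) (Finset.mem_univ z)
    exact le_antisymm (hy ▸ h1) (hl23_0 _)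
  have hR12z : ∀ x y x' y', P₂ y y' = 0 → R12 (x, y) (x', y') = 0 := by
    intro x y x' y' hz
    have h1 : R12 (x, y) (x', y') ≤ P₂ y y' := by
      rw [← hR12_b x y y']
      exact Finset.single_le_sum (f := fun x' => R12 (x, y) (x', y')) (fun t _ => hR12_0 _ _)
        (Finset.mem_univ x')
    exact le_antisymm (hz ▸ h1) (hR12_0 _ _)
  have hR23z : ∀ y z y' z', P₂ y y' = 0 → R23 (y, z) (y', z') = 0 := by
    intro y z y' z' hz
    have h1 : R23 (y, z) (y', z') ≤ P₂ y y' := by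
      rw [← hR23_a y z y']
      exact Finset.single_le_sum (f := fun z' => R23 (y, z) (y', z')) (fun t _ => hR23_0 _ _)
        (Finset.mem_univ z')
    exact le_antisymm (hz ▸ h1) (hR23_0 _ _)
  -- glued transition matrix on triples
  set Qm : (Fin d × Fin d × Fin d) → (Fin d × Fin d × Fin d) → ℝ :=
    fun s t => R12 (s.1, s.2.1) (t.1, t.2.1) * R23 (s.2.1, s.2.2) (t.2.1, t.2.2) / P₂ s.2.1 t.2.1
    with hQm_def
  have hQm0 : ∀ s t, 0 ≤ Qm s t :=
    fun s t => div_nonneg (mul_nonneg (hR12_0 _ _) (hR23_0 _ _)) (hP₂0 _ _)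
  have L1 : ∀ s x' y', ∑ z', Qm s (x', y', z') = R12 (s.1, s.2.1) (x', y') := by
    intro s x' y'
    by_cases hP : P₂ s.2.1 y' = 0
    · rw [hR12z s.1 s.2.1 x' y' hP]
      simp [hQm_def, hP]
    · simp only [hQm_def]
      rw [← Finset.sum_div, ← Finset.mul_sum, hR23_a s.2.1 s.2.2 y', mul_div_assoc,
        div_self hP, mul_one]
  have L2 : ∀ s y' z', ∑ x', Qm s (x', y', z') = R23 (s.2.1, s.2.2) (y', z') := by
    intro s y' z'
    by_cases hP : P₂ s.2.1 y' = 0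
    · rw [hR23z s.2.1 s.2.2 y' z' hP]
      simp [hQm_def, hP]
    · simp only [hQm_def]
      rw [← Finset.sum_div, ← Finset.sum_mul, hR12_b s.1 s.2.1 y', mul_comm, mul_div_assoc,
        div_self hP, mul_one]
  have L4 : ∀ s x', ∑ y', ∑ z', Qm s (x', y', z') = P₁ s.1 x' := by
    intro s x'
    rw [Finset.sum_congr rfl fun y' _ => L1 s x' y']
    exact hR12_a s.1 s.2.1 x'
  have L5 : ∀ s z', ∑ y', ∑ x', Qm s (x', y', z') = P₃ s.2.2 z' := by
    intro s z'
    rw [Finset.sum_congr rfl fun y' _ => L2 s y' z']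
    exact hR23_b s.2.1 s.2.2 z'
  have L3 : ∀ s, ∑ t, Qm s t = 1 := by
    intro s
    simp only [Fintype.sum_prod_type]
    rw [Finset.sum_congr rfl fun x' _ => L4 s x']
    exact hP₁1 s.1
  -- glued initial distribution on triples
  set μ : Fin d × Fin d × Fin d → ℝ :=
    fun t => l12 (t.1, t.2.1) * l23 (t.2.1, t.2.2) / q t.2.1 with hμ_def
  have hμ0 : ∀ t, 0 ≤ μ t :=
    fun t => div_nonneg (mul_nonneg (hl12_0 _) (hl23_0 _)) (hq0 _)
  have hμ12 : ∀ x y, ∑ z, μ (x, y, z) = l12 (x, y) := by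
    intro x y
    by_cases hy : q y = 0
    · rw [hqz12 x y hy]
      simp [hμ_def, hqz12 x y hy]
    · simp only [hμ_def]
      have : ∀ z, l12 (x, y) * l23 (y, z) / q y = l12 (x, y) / q y * l23 (y, z) := by
        intro z; ring
      rw [Finset.sum_congr rfl fun z _ => this z, ← Finset.mul_sum]
      have hq'y : ∑ z, l23 (y, z) = q y := by rw [hqq']
      rw [hq'y, div_mul_cancel₀ _ hy]
  have hμ23 : ∀ y z, ∑ x, μ (x, y, z) = l23 (y, z) := by
    intro y z
    by_cases hy : q y = 0
    · rw [hqz23 y z hy]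
      simp [hμ_def, hqz12 _ y hy]
    · simp only [hμ_def]
      have : ∀ x, l12 (x, y) * l23 (y, z) / q y = l12 (x, y) * (l23 (y, z) / q y) := by
        intro x; ring
      rw [Finset.sum_congr rfl fun x _ => this x, ← Finset.sum_mul]
      have : ∑ x, l12 (x, y) = q y := rfl
      rw [this, mul_comm, div_mul_cancel₀ _ hy]
  have hμ1 : ∑ t, μ t = 1 := by
    simp only [Fintype.sum_prod_type]
    have h1 : ∀ x y, ∑ z, μ (x, y, z) = l12 (x, y) := hμ12
    calc ∑ x, ∑ y, ∑ z, μ (x, y, z) = ∑ x, ∑ y, l12 (x, y) := by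
          refine Finset.sum_congr rfl fun x _ => Finset.sum_congr rfl fun y _ => h1 x y
    _ = 1 := by rw [← Fintype.sum_prod_type]; exact hl12_1
  -- the invariant constraint set
  set C : Set (Fin d × Fin d × Fin d → ℝ) :=
    {v | (∀ x y, ∑ z, v (x, y, z) = l12 (x, y)) ∧ (∀ y z, ∑ x, v (x, y, z) = l23 (y, z))}
    with hC_def
  have hCc : IsClosed C := by
    have e1 : C = (⋂ (x) (y), {v : Fin d × Fin d × Fin d → ℝ | ∑ z, v (x, y, z) = l12 (x, y)})
        ∩ (⋂ (y) (z), {v : Fin d × Fin d × Fin d → ℝ | ∑ x, v (x, y, z) = l23 (y, z)}) := by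
      ext v
      simp only [hC_def, Set.mem_setOf_eq, Set.mem_inter_iff, Set.mem_iInter]
    rw [e1]
    refine IsClosed.inter ?_ ?_
    · exact isClosed_iInter fun x => isClosed_iInter fun y =>
        isClosed_eq (by fun_prop) continuous_const
    · exact isClosed_iInter fun y => isClosed_iInter fun z =>
        isClosed_eq (by fun_prop) continuous_const
  have hCx : Convex ℝ C := by
    intro v hv w hw α β hα hβ hab
    constructor
    · intro x y
      have : ∀ z, (α • v + β • w) (x, y, z) = α * v (x, y, z) + β * w (x, y, z) := fun z => rfl
      rw [Finset.sum_congr rfl fun z _ => this z, Finset.sum_add_distrib,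
        ← Finset.mul_sum, ← Finset.mul_sum, hv.1 x y, hw.1 x y, ← add_mul, hab, one_mul]
    · intro y z
      have : ∀ x, (α • v + β • w) (x, y, z) = α * v (x, y, z) + β * w (x, y, z) := fun x => rfl
      rw [Finset.sum_congr rfl fun x _ => this x, Finset.sum_add_distrib,
        ← Finset.mul_sum, ← Finset.mul_sum, hv.2 y z, hw.2 y z, ← add_mul, hab, one_mul]
  have hμC : μ ∈ C := ⟨hμ12, hμ23⟩
  have hCi : ∀ v ∈ C, (fun t' => ∑ t, v t * Qm t t') ∈ C := by
    intro v hv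
    constructor
    · intro x' y'
      calc ∑ z', ∑ t, v t * Qm t (x', y', z')
          = ∑ t, ∑ z', v t * Qm t (x', y', z') := Finset.sum_comm
      _ = ∑ t, v t * R12 (t.1, t.2.1) (x', y') := by
            refine Finset.sum_congr rfl fun t _ => ?_
            rw [← Finset.mul_sum, L1 t x' y']
      _ = ∑ x, ∑ y, (∑ z, v (x, y, z)) * R12 (x, y) (x', y') := by
            simp only [Fintype.sum_prod_type]
            exact Finset.sum_congr rfl fun x _ => Finset.sum_congr rfl fun y _ =>
              (Finset.sum_mul _ _ _).symm
      _ = ∑ x, ∑ y, l12 (x, y) * R12 (x, y) (x', y') := by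
            exact Finset.sum_congr rfl fun x _ => Finset.sum_congr rfl fun y _ => by
              rw [hv.1 x y]
      _ = l12 (x', y') := by
            rw [← hl12_s (x', y'), Fintype.sum_prod_type]
    · intro y' z'
      calc ∑ x', ∑ t, v t * Qm t (x', y', z')
          = ∑ t, ∑ x', v t * Qm t (x', y', z') := Finset.sum_comm
      _ = ∑ t, v t * R23 (t.2.1, t.2.2) (y', z') := by
            refine Finset.sum_congr rfl fun t _ => ?_
            rw [← Finset.mul_sum, L2 t y' z']
      _ = ∑ x, ∑ y, ∑ z, v (x, y, z) * R23 (y, z) (y', z') := by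
            simp only [Fintype.sum_prod_type]
      _ = ∑ y, ∑ z, ∑ x, v (x, y, z) * R23 (y, z) (y', z') := by
            rw [Finset.sum_comm]
            exact Finset.sum_congr rfl fun y _ => Finset.sum_comm
      _ = ∑ y, ∑ z, l23 (y, z) * R23 (y, z) (y', z') := by
            refine Finset.sum_congr rfl fun y _ => Finset.sum_congr rfl fun z _ => ?_
            rw [← Finset.sum_mul, hv.2 y z]
      _ = l23 (y', z') := by
            rw [← hl23_s (y', z'), Fintype.sum_prod_type]
  obtain ⟨η, hηC, hη0, hη1, hηs⟩ := cesaro Qm hQm0 L3 μ hμ0 hμ1 C hCc hCx hμC hCi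
  -- project onto coordinates (1,3)
  set ν : Fin d × Fin d → ℝ := fun p => ∑ y, η (p.1, y, p.2) with hν_def
  have hν0 : ∀ p, 0 ≤ ν p := fun p => Finset.sum_nonneg fun y _ => hη0 _
  have hην : ∀ x y z, η (x, y, z) ≤ ν (x, z) := fun x y z =>
    Finset.single_le_sum (f := fun y => η (x, y, z)) (fun y _ => hη0 _) (Finset.mem_univ y)
  have hνz : ∀ x z, ν (x, z) = 0 → ∀ y, η (x, y, z) = 0 := fun x z hp y =>
    le_antisymm (hp ▸ hην x y z) (hη0 _)
  set K : Fin d × Fin d → Fin d × Fin d → ℝ :=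
    fun p p' => ∑ y, ∑ y', η (p.1, y, p.2) * Qm (p.1, y, p.2) (p'.1, y', p'.2) with hK_def
  have hK0 : ∀ p p', 0 ≤ K p p' := fun p p' =>
    Finset.sum_nonneg fun y _ => Finset.sum_nonneg fun y' _ =>
      mul_nonneg (hη0 _) (hQm0 _ _)
  have hKrow1 : ∀ x z x', ∑ z', K (x, z) (x', z') = ν (x, z) * P₁ x x' := by
    intro x z x'
    calc ∑ z', K (x, z) (x', z')
        = ∑ y, ∑ z', ∑ y', η (x, y, z) * Qm (x, y, z) (x', y', z') := Finset.sum_comm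
    _ = ∑ y, ∑ y', ∑ z', η (x, y, z) * Qm (x, y, z) (x', y', z') :=
          Finset.sum_congr rfl fun y _ => Finset.sum_comm
    _ = ∑ y, η (x, y, z) * P₁ x x' := by
          refine Finset.sum_congr rfl fun y _ => ?_
          rw [← L4 (x, y, z) x']
          rw [Finset.mul_sum]
          exact Finset.sum_congr rfl fun y' _ => (Finset.mul_sum _ _ _).symm
    _ = ν (x, z) * P₁ x x' := (Finset.sum_mul _ _ _).symm
  have hKrow2 : ∀ x z z', ∑ x', K (x, z) (x', z') = ν (x, z) * P₃ z z' := by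
    intro x z z'
    calc ∑ x', K (x, z) (x', z')
        = ∑ y, ∑ x', ∑ y', η (x, y, z) * Qm (x, y, z) (x', y', z') := Finset.sum_comm
    _ = ∑ y, ∑ y', ∑ x', η (x, y, z) * Qm (x, y, z) (x', y', z') :=
          Finset.sum_congr rfl fun y _ => Finset.sum_comm
    _ = ∑ y, η (x, y, z) * P₃ z z' := by
          refine Finset.sum_congr rfl fun y _ => ?_
          rw [← L5 (x, y, z) z']
          rw [Finset.mul_sum]
          exact Finset.sum_congr rfl fun y' _ => (Finset.mul_sum _ _ _).symm
    _ = ν (x, z) * P₃ z z' := (Finset.sum_mul _ _ _).symm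
  have hKstat : ∀ x' z', ∑ p : Fin d × Fin d, K p (x', z') = ν (x', z') := by
    intro x' z'
    calc ∑ p : Fin d × Fin d, K p (x', z')
        = ∑ x, ∑ z, ∑ y, ∑ y', η (x, y, z) * Qm (x, y, z) (x', y', z') := by
          rw [Fintype.sum_prod_type]
    _ = ∑ x, ∑ y, ∑ z, ∑ y', η (x, y, z) * Qm (x, y, z) (x', y', z') :=
          Finset.sum_congr rfl fun x _ => Finset.sum_comm
    _ = ∑ x, ∑ y, ∑ y', ∑ z, η (x, y, z) * Qm (x, y, z) (x', y', z') :=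
          Finset.sum_congr rfl fun x _ => Finset.sum_congr rfl fun y _ => Finset.sum_comm
    _ = ∑ x, ∑ y', ∑ y, ∑ z, η (x, y, z) * Qm (x, y, z) (x', y', z') :=
          Finset.sum_congr rfl fun x _ => Finset.sum_comm
    _ = ∑ y', ∑ x, ∑ y, ∑ z, η (x, y, z) * Qm (x, y, z) (x', y', z') := Finset.sum_comm
    _ = ∑ y', η (x', y', z') := by
          refine Finset.sum_congr rfl fun y' _ => ?_
          rw [← hηs (x', y', z')]
          simp only [Fintype.sum_prod_type]
    _ = ν (x', z') := rfl
  set R13 : Fin d × Fin d → Fin d × Fin d → ℝ :=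
    fun p p' => if ν p = 0 then P₁ p.1 p'.1 * P₃ p.2 p'.2 else K p p' / ν p with hR13_def
  have hR13_0 : ∀ p p', 0 ≤ R13 p p' := by
    intro p p'
    simp only [hR13_def]
    split
    · exact mul_nonneg (hP₁0 _ _) (hP₃0 _ _)
    · exact div_nonneg (hK0 _ _) (hν0 _)
  have hR13_a : ∀ x z x', ∑ z', R13 (x, z) (x', z') = P₁ x x' := by
    intro x z x'
    by_cases hp : ν (x, z) = 0
    · simp only [hR13_def, hp, if_true, eq_self_iff_true]
      rw [← Finset.mul_sum, hP₃1 z, mul_one]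
    · simp only [hR13_def, hp, if_false]
      rw [← Finset.sum_div, hKrow1 x z x', mul_comm, mul_div_assoc, div_self hp, mul_one]
  have hR13_b : ∀ x z z', ∑ x', R13 (x, z) (x', z') = P₃ z z' := by
    intro x z z'
    by_cases hp : ν (x, z) = 0
    · simp only [hR13_def, hp, if_true, eq_self_iff_true]
      rw [← Finset.sum_mul, hP₁1 x, one_mul]
    · simp only [hR13_def, hp, if_false]
      rw [← Finset.sum_div, hKrow2 x z z', mul_comm, mul_div_assoc, div_self hp, mul_one]
  have hν1 : ∑ p : Fin d × Fin d, ν p = 1 := by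
    calc ∑ p : Fin d × Fin d, ν p = ∑ x, ∑ z, ∑ y, η (x, y, z) := by rw [Fintype.sum_prod_type]
    _ = ∑ x, ∑ y, ∑ z, η (x, y, z) := Finset.sum_congr rfl fun x _ => Finset.sum_comm
    _ = 1 := by rw [← hη1]; simp only [Fintype.sum_prod_type]
  have hνstat : ∀ p', ∑ p : Fin d × Fin d, ν p * R13 p p' = ν p' := by
    intro p'
    have key : ∀ p, ν p * R13 p p' = K p p' := by
      intro p
      by_cases hp : ν p = 0
      · simp only [hR13_def, hp, if_true, eq_self_iff_true, zero_mul]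
        symm
        simp only [hK_def]
        refine Finset.sum_eq_zero fun y _ => Finset.sum_eq_zero fun y' _ => ?_
        rw [hνz p.1 p.2 hp y, zero_mul]
      · simp only [hR13_def, hp, if_false]
        rw [mul_comm, div_mul_cancel₀ _ hp]
    rw [Finset.sum_congr rfl fun p _ => key p]
    obtain ⟨x', z'⟩ := p'
    exact hKstat x' z'
  -- the cost bound
  have hcost : ∑ p : Fin d × Fin d, c p.1 p.2 * ν p ≤ a + b := by
    have e1 : ∑ p : Fin d × Fin d, c p.1 p.2 * ν p
        = ∑ t : Fin d × Fin d × Fin d, c t.1 t.2.2 * η t := by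
      calc ∑ p : Fin d × Fin d, c p.1 p.2 * ν p
          = ∑ x, ∑ z, ∑ y, c x z * η (x, y, z) := by
            rw [Fintype.sum_prod_type]
            exact Finset.sum_congr rfl fun x _ => Finset.sum_congr rfl fun z _ =>
              Finset.mul_sum _ _ _
      _ = ∑ x, ∑ y, ∑ z, c x z * η (x, y, z) :=
            Finset.sum_congr rfl fun x _ => Finset.sum_comm
      _ = ∑ t : Fin d × Fin d × Fin d, c t.1 t.2.2 * η t := by
            simp only [Fintype.sum_prod_type]
    have e2 : ∑ t : Fin d × Fin d × Fin d, c t.1 t.2.1 * η t = a := by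
      rw [ha_eq]
      calc ∑ t : Fin d × Fin d × Fin d, c t.1 t.2.1 * η t
          = ∑ x, ∑ y, ∑ z, c x y * η (x, y, z) := by simp only [Fintype.sum_prod_type]
      _ = ∑ x, ∑ y, c x y * l12 (x, y) := by
            refine Finset.sum_congr rfl fun x _ => Finset.sum_congr rfl fun y _ => ?_
            rw [← Finset.mul_sum, hηC.1 x y]
      _ = ∑ s : Fin d × Fin d, c s.1 s.2 * l12 s := by rw [Fintype.sum_prod_type]
    have e3 : ∑ t : Fin d × Fin d × Fin d, c t.2.1 t.2.2 * η t = b := by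
      rw [hb_eq]
      calc ∑ t : Fin d × Fin d × Fin d, c t.2.1 t.2.2 * η t
          = ∑ x, ∑ y, ∑ z, c y z * η (x, y, z) := by simp only [Fintype.sum_prod_type]
      _ = ∑ y, ∑ x, ∑ z, c y z * η (x, y, z) := Finset.sum_comm
      _ = ∑ y, ∑ z, ∑ x, c y z * η (x, y, z) :=
            Finset.sum_congr rfl fun y _ => Finset.sum_comm
      _ = ∑ y, ∑ z, c y z * l23 (y, z) := by
            refine Finset.sum_congr rfl fun y _ => Finset.sum_congr rfl fun z _ => ?_
            rw [← Finset.mul_sum, hηC.2 y z]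
      _ = ∑ s : Fin d × Fin d, c s.1 s.2 * l23 s := by rw [Fintype.sum_prod_type]
    rw [e1, ← e2, ← e3, ← Finset.sum_add_distrib]
    refine Finset.sum_le_sum fun t _ => ?_
    rw [← add_mul]
    exact mul_le_mul_of_nonneg_right (htri t.1 t.2.1 t.2.2) (hη0 t)
  exact ⟨∑ p : Fin d × Fin d, c p.1 p.2 * ν p,
    ⟨ν, R13, hR13_0, hR13_a, hR13_b, hν0, hν1, hνstat, rfl⟩, hcost⟩

/-- the optimal transition coupling cost satisfies the triangle inequality
when the underlying cost does. -/
theorem stmt_11 (d : ℕ)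
    (P₁ P₂ P₃ : Matrix (Fin d) (Fin d) ℝ)
    (h₁ : (∀ x x', 0 ≤ P₁ x x') ∧ ∀ x, ∑ x', P₁ x x' = 1)
    (h₂ : (∀ x x', 0 ≤ P₂ x x') ∧ ∀ x, ∑ x', P₂ x x' = 1)
    (h₃ : (∀ x x', 0 ≤ P₃ x x') ∧ ∀ x, ∑ x', P₃ x x' = 1)
    (hirr₁ : MatIrreducible P₁) (hirr₂ : MatIrreducible P₂) (hirr₃ : MatIrreducible P₃)
    (c : Fin d → Fin d → ℝ)
    (hc : ∀ x y, 0 ≤ c x y)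
    (htri : ∀ x y z, c x z ≤ c x y + c y z) :
    otcCost d c P₁ P₃ ≤ otcCost d c P₁ P₂ + otcCost d c P₂ P₃ := by
  obtain ⟨hP₁0, hP₁1⟩ := h₁
  obtain ⟨hP₂0, hP₂1⟩ := h₂
  obtain ⟨hP₃0, hP₃1⟩ := h₃
  rcases Nat.eq_zero_or_pos d with hd | hd
  · subst hd
    have hempty : ∀ (c : Fin 0 → Fin 0 → ℝ) (P Q : Matrix (Fin 0) (Fin 0) ℝ),
        otcCost 0 c P Q = 0 := by
      intro c P Q
      have he : feasSet 0 c P Q = (∅ : Set ℝ) := by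
        ext v
        simp only [feasSet, Set.mem_setOf_eq, Set.mem_empty_iff_false, iff_false]
        rintro ⟨lam, R, -, -, -, -, h1, -, -⟩
        simp at h1
      have : otcCost 0 c P Q = sInf (feasSet 0 c P Q) := rfl
      rw [this, he, Real.sInf_empty]
    rw [hempty, hempty, hempty]
    norm_num
  · have hS12 := feas_nonempty hd c P₁ P₂ hP₁0 hP₁1 hP₂0 hP₂1
    have hS23 := feas_nonempty hd c P₂ P₃ hP₂0 hP₂1 hP₃0 hP₃1
    have hbdd : BddBelow (feasSet d c P₁ P₃) := ⟨0, fun v hv => feas_nonneg hc v hv⟩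
    have key : ∀ a ∈ feasSet d c P₁ P₂, ∀ b ∈ feasSet d c P₂ P₃,
        sInf (feasSet d c P₁ P₃) ≤ a + b := by
      intro a ha b hb
      obtain ⟨v, hv, hvle⟩ := glue hd P₁ P₂ P₃ hP₁0 hP₁1 hP₂0 hP₂1 hP₃0 hP₃1 hirr₂
        c hc htri ha hb
      exact le_trans (csInf_le hbdd hv) hvle
    have h2 : ∀ a ∈ feasSet d c P₁ P₂,
        sInf (feasSet d c P₁ P₃) - a ≤ sInf (feasSet d c P₂ P₃) :=
      fun a ha => le_csInf hS23 fun b hb => by linarith [key a ha b hb]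
    have h3 : sInf (feasSet d c P₁ P₃) - sInf (feasSet d c P₂ P₃) ≤ sInf (feasSet d c P₁ P₂) :=
      le_csInf hS12 fun a ha => by linarith [h2 a ha]
    show sInf (feasSet d c P₁ P₃) ≤ sInf (feasSet d c P₁ P₂) + sInf (feasSet d c P₂ P₃)
    linarith
end
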